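/- Let a : ℕ → ℚ, f(z) = ∑_{k≥0} a(k) z^k/k! ∈ ℚ[[z]], and define F(k₁,…,k_r) as the constant term of ∂_z^{k_r}[ f(z) ∂_z^{k_{r-1}}[ f(z) ··· ∂_z^{k₁}[f(z)] ··· ] ]. Then for r ≥ 2 and k₁,…,k_r ∈ ℕ the recurrence F(k₁,…,k_r) = ∑_{i+j=k_r} C(k_r, i) F(i) · F(k₁,…,k_{r-2}, k_{r-1}+j) holds. -/

import Mathlib

/-- The iterated expression `∂^{k_r}[ f · ∂^{k_{r-1}}[ f ⋯ ∂^{k₁}[f] ⋯ ] ]`,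
with the list of exponents in reversed order `[k_r, …, k₁]`. -/
noncomputable def iterExpr (f : PowerSeries ℚ) : List ℕ → PowerSeries ℚ
  | [] => 1
  | k :: ks => PowerSeries.derivativeFun^[k] (f * iterExpr f ks)

lemma coeff_derivativeFun_iterate (h : PowerSeries ℚ) (m : ℕ) : ∀ n : ℕ,
    (n.factorial : ℚ) * PowerSeries.coeff n (PowerSeries.derivativeFun^[m] h)
      = ((n + m).factorial : ℚ) * PowerSeries.coeff (n + m) h := by
  induction m with
  | zero => intro n; simp
  | succ m ih =>
      intro n
      rw [Function.iterate_succ_apply', show ∀ g : PowerSeries ℚ, PowerSeries.coeff n g.derivativeFun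
          = PowerSeries.coeff (n + 1) g * (n + 1) from fun g => PowerSeries.coeff_derivative g n]
      have := ih (n + 1)
      have hfac : ((n + 1).factorial : ℚ) = (n.factorial : ℚ) * (n + 1) := by
        push_cast [Nat.factorial_succ]; ring
      calc (n.factorial : ℚ) *
            (PowerSeries.coeff (n + 1) (PowerSeries.derivativeFun^[m] h) * (n + 1))
          = ((n + 1).factorial : ℚ) *
            PowerSeries.coeff (n + 1) (PowerSeries.derivativeFun^[m] h) := by
            rw [hfac]; ring
        _ = ((n + 1 + m).factorial : ℚ) * PowerSeries.coeff (n + 1 + m) h := ih (n + 1)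
        _ = ((n + (m + 1)).factorial : ℚ) * PowerSeries.coeff (n + (m + 1)) h := by
            ring_nf

lemma constCoeff_derivativeFun_iterate (h : PowerSeries ℚ) (m : ℕ) :
    PowerSeries.constantCoeff (PowerSeries.derivativeFun^[m] h)
      = (m.factorial : ℚ) * PowerSeries.coeff m h := by
  have := coeff_derivativeFun_iterate h m 0
  simpa [PowerSeries.coeff_zero_eq_constantCoeff] using this

/-- With `f(z) = ∑ a(k) z^k/k!` and `F(k₁,…,k_r)` the constant term of
`∂^{k_r}[ f · ∂^{k_{r-1}}[ f ⋯ ∂^{k₁}[f] ⋯ ] ]`, the recurrence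
`F(k₁,…,k_r) = ∑_{i+j=k_r} C(k_r,i) F(i) F(k₁,…,k_{r-2},k_{r-1}+j)` holds
(here `ks = [k_{r-2},…,k₁]`, `F(i) = a(i)`). -/
theorem iterated_derivative_recurrence (a : ℕ → ℚ) (f : PowerSeries ℚ)
    (hf : f = PowerSeries.mk fun k => a k / k.factorial)
    (ks : List ℕ) (km1 kr : ℕ) :
    PowerSeries.constantCoeff (iterExpr f (kr :: km1 :: ks))
      = ∑ p ∈ Finset.HasAntidiagonal.antidiagonal kr,
          (kr.choose p.1 : ℚ) * PowerSeries.constantCoeff (iterExpr f [p.1])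
            * PowerSeries.constantCoeff (iterExpr f ((km1 + p.2) :: ks)) := by
  set h := f * iterExpr f ks with hh
  have lhs : PowerSeries.constantCoeff (iterExpr f (kr :: km1 :: ks))
      = (kr.factorial : ℚ) * ∑ p ∈ Finset.HasAntidiagonal.antidiagonal kr,
          PowerSeries.coeff p.1 f *
            PowerSeries.coeff p.2 (PowerSeries.derivativeFun^[km1] h) := by
    show PowerSeries.constantCoeff
        (PowerSeries.derivativeFun^[kr] (f * iterExpr f (km1 :: ks))) = _
    rw [constCoeff_derivativeFun_iterate]
    congr 1
    exact PowerSeries.coeff_mul kr f _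
  rw [lhs, Finset.mul_sum]
  refine Finset.sum_congr rfl ?_
  intro p hp
  have hpk : p.1 + p.2 = kr := Finset.HasAntidiagonal.mem_antidiagonal.mp hp
  have h1 : PowerSeries.constantCoeff (iterExpr f [p.1])
      = (p.1.factorial : ℚ) * PowerSeries.coeff p.1 f := by
    show PowerSeries.constantCoeff (PowerSeries.derivativeFun^[p.1] (f * 1)) = _
    rw [mul_one, constCoeff_derivativeFun_iterate]
  have h2 : PowerSeries.constantCoeff (iterExpr f ((km1 + p.2) :: ks))
      = ((km1 + p.2).factorial : ℚ) * PowerSeries.coeff (km1 + p.2) h := by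
    show PowerSeries.constantCoeff (PowerSeries.derivativeFun^[km1 + p.2] h) = _
    rw [constCoeff_derivativeFun_iterate]
  have h3 : (p.2.factorial : ℚ) *
      PowerSeries.coeff p.2 (PowerSeries.derivativeFun^[km1] h)
      = ((p.2 + km1).factorial : ℚ) * PowerSeries.coeff (p.2 + km1) h :=
    coeff_derivativeFun_iterate h km1 p.2
  have hchoose : (kr.choose p.1 : ℚ) * p.1.factorial * p.2.factorial = kr.factorial := by
    have := Nat.choose_mul_factorial_mul_factorial (Nat.le.intro hpk)
    rw [← hpk] at this ⊢
    push_cast [Nat.add_sub_cancel_left] at this ⊢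
    try exact_mod_cast this
  rw [h1, h2]
  have hp2 : (p.2.factorial : ℚ) ≠ 0 := Nat.cast_ne_zero.mpr (Nat.factorial_ne_zero _)
  have hc : PowerSeries.coeff p.2 (PowerSeries.derivativeFun^[km1] h)
      = ((p.2 + km1).factorial : ℚ) * PowerSeries.coeff (p.2 + km1) h / p.2.factorial := by
    field_simp [← h3]
    rw [← h3]; ring
  rw [hc]
  rw [show km1 + p.2 = p.2 + km1 from Nat.add_comm _ _]
  field_simp
  rw [← hchoose]
  ring
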